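/- Let p be a prime, l ≥ 1, and Λ = ℤ_p[[T_1,…,T_l]] the ring of formal multivariate power series over the p-adic integers. For m ∈ ℕ let I_m ⊆ Λ be the ideal generated by ω_m(T_i) = (1+T_i)^{p^m} − 1 for i = 1,…,l. Let L be a finitely generated Λ-module, let N ⊆ L be a Λ-submodule such that L_m := I_m·L ⊆ N for every m ∈ ℕ, and let I ⊆ Λ be an ideal. Suppose that for some m ∈ ℕ the quotients N/(I·N + L_m) and N/(I·N + L_{m+1}) are both finite and have the same cardinality. Then L_m ⊆ I·N; consequently I·N + L_k = I·N for every k ≥ m, the quotient N/(I·N) is finite, and N/(I·N + L_k) has the same cardinality as N/(I·N + L_m) for every k ≥ m. -/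

import Mathlib

open Submodule

/-- The ideal `I_{m+1}` is contained in `𝔪 * I_m`. -/
lemma fukuda_ideal_step (p l : ℕ) [Fact p.Prime] (m : ℕ) :
    Ideal.span (Set.range fun i : Fin l =>
        ((1 + MvPowerSeries.X i) ^ (p ^ (m + 1)) - 1 : MvPowerSeries (Fin l) ℤ_[p]))
      ≤ IsLocalRing.maximalIdeal (MvPowerSeries (Fin l) ℤ_[p]) *
        Ideal.span (Set.range fun i : Fin l =>
          ((1 + MvPowerSeries.X i) ^ (p ^ m) - 1 : MvPowerSeries (Fin l) ℤ_[p])) := by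
  rw [Ideal.span_le]
  rintro _ ⟨i, rfl⟩
  show ((1 + MvPowerSeries.X i) ^ (p ^ (m + 1)) - 1 : MvPowerSeries (Fin l) ℤ_[p]) ∈ _
  set x : MvPowerSeries (Fin l) ℤ_[p] := (1 + MvPowerSeries.X i) ^ (p ^ m) with hxdef
  have hfac : ((1 + MvPowerSeries.X i) ^ (p ^ (m + 1)) - 1 : MvPowerSeries (Fin l) ℤ_[p])
      = (∑ j ∈ Finset.range p, x ^ j) * (x - 1) := by
    rw [geom_sum_mul, hxdef, ← pow_mul, ← pow_succ]
  rw [hfac]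
  apply Ideal.mul_mem_mul
  · rw [IsLocalRing.mem_maximalIdeal, mem_nonunits_iff,
      MvPowerSeries.isUnit_iff_constantCoeff]
    have hc : (MvPowerSeries.constantCoeff : MvPowerSeries (Fin l) ℤ_[p] →+* ℤ_[p]) (∑ j ∈ Finset.range p, x ^ j)
        = (p : ℤ_[p]) := by
      rw [map_sum]
      have hx1 : (MvPowerSeries.constantCoeff : MvPowerSeries (Fin l) ℤ_[p] →+* ℤ_[p]) x = 1 := by
        simp [hxdef]
      simp [map_pow, hx1]
    rw [hc]
    exact PadicInt.p_nonunit
  · exact Ideal.subset_span ⟨i, rfl⟩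

theorem fukuda_stabilisation (p : ℕ) [Fact p.Prime] (l : ℕ) (hl : 1 ≤ l)
    (L : Type*) [AddCommGroup L] [Module (MvPowerSeries (Fin l) ℤ_[p]) L]
    [Module.Finite (MvPowerSeries (Fin l) ℤ_[p]) L]
    (N : Submodule (MvPowerSeries (Fin l) ℤ_[p]) L)
    (Lm : ℕ → Submodule (MvPowerSeries (Fin l) ℤ_[p]) L)
    (hLm : ∀ m : ℕ, Lm m =
      (Ideal.span (Set.range fun i : Fin l =>
          ((1 + MvPowerSeries.X i) ^ (p ^ m) - 1 : MvPowerSeries (Fin l) ℤ_[p]))) •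
        (⊤ : Submodule (MvPowerSeries (Fin l) ℤ_[p]) L))
    (hN : ∀ m : ℕ, Lm m ≤ N)
    (I : Ideal (MvPowerSeries (Fin l) ℤ_[p]))
    (m : ℕ)
    (h1 : Finite (↥N ⧸ Submodule.comap N.subtype (I • N ⊔ Lm m)))
    (h2 : Finite (↥N ⧸ Submodule.comap N.subtype (I • N ⊔ Lm (m + 1))))
    (h3 : Nat.card (↥N ⧸ Submodule.comap N.subtype (I • N ⊔ Lm m)) =
          Nat.card (↥N ⧸ Submodule.comap N.subtype (I • N ⊔ Lm (m + 1)))) :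
    Lm m ≤ I • N ∧
    (∀ k : ℕ, m ≤ k → I • N ⊔ Lm k = I • N) ∧
    Finite (↥N ⧸ Submodule.comap N.subtype (I • N)) ∧
    (∀ k : ℕ, m ≤ k →
      Nat.card (↥N ⧸ Submodule.comap N.subtype (I • N ⊔ Lm k)) =
      Nat.card (↥N ⧸ Submodule.comap N.subtype (I • N ⊔ Lm m))) := by
  set Λ := MvPowerSeries (Fin l) ℤ_[p]
  set 𝔪 := IsLocalRing.maximalIdeal Λ with h𝔪
  -- basic step: Lm (k+1) ≤ 𝔪 • Lm k
  have hsmul : ∀ k, Lm (k + 1) ≤ 𝔪 • Lm k := by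
    intro k
    rw [hLm (k + 1), hLm k]
    calc (Ideal.span (Set.range fun i : Fin l =>
          ((1 + MvPowerSeries.X i) ^ (p ^ (k + 1)) - 1 : Λ))) • (⊤ : Submodule Λ L)
        ≤ (𝔪 * Ideal.span (Set.range fun i : Fin l =>
          ((1 + MvPowerSeries.X i) ^ (p ^ k) - 1 : Λ))) • (⊤ : Submodule Λ L) :=
          Submodule.smul_mono_left (fukuda_ideal_step p l k)
      _ = 𝔪 • (Ideal.span (Set.range fun i : Fin l =>
          ((1 + MvPowerSeries.X i) ^ (p ^ k) - 1 : Λ))) • (⊤ : Submodule Λ L) := by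
          rw [← Ideal.smul_eq_mul, Submodule.smul_assoc]
  have hmono : ∀ k, Lm (k + 1) ≤ Lm k := fun k => (hsmul k).trans Submodule.smul_le_right
  -- Step 1: I•N ⊔ Lm m = I•N ⊔ Lm (m+1)
  have hBA : I • N ⊔ Lm (m + 1) ≤ I • N ⊔ Lm m := sup_le_sup_left (hmono m) _
  have hAN : I • N ⊔ Lm m ≤ N := sup_le Submodule.smul_le_right (hN m)
  have hBN : I • N ⊔ Lm (m + 1) ≤ N := sup_le Submodule.smul_le_right (hN (m + 1))
  have hBA' : Submodule.comap N.subtype (I • N ⊔ Lm (m + 1))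
      ≤ Submodule.comap N.subtype (I • N ⊔ Lm m) := Submodule.comap_mono hBA
  set B' := Submodule.comap N.subtype (I • N ⊔ Lm (m + 1)) with hB'
  set A' := Submodule.comap N.subtype (I • N ⊔ Lm m) with hA'
  have hle' : B' ≤ A'.comap LinearMap.id := hBA'
  set f : (↥N ⧸ B') →ₗ[Λ] (↥N ⧸ A') := Submodule.mapQ B' A' LinearMap.id hle' with hf
  have hsurj : Function.Surjective f := by
    intro y
    obtain ⟨x, rfl⟩ := Submodule.mkQ_surjective A' y
    exact ⟨Submodule.mkQ B' x, by rw [hf]; erw [Submodule.mapQ_apply]⟩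
  have hbij : Function.Bijective f :=
    (Nat.bijective_iff_surjective_and_card f).mpr ⟨hsurj, h3.symm⟩
  have hA'B' : A' ≤ B' := by
    intro x hx
    have h0 : f (Submodule.Quotient.mk x) = 0 := by
      rw [hf, Submodule.mapQ_apply]
      exact (Submodule.Quotient.mk_eq_zero A').mpr hx
    have := hbij.injective (by rw [h0, map_zero] : f (Submodule.Quotient.mk x) = f 0)
    exact (Submodule.Quotient.mk_eq_zero B').mp this
  have hAB : I • N ⊔ Lm m = I • N ⊔ Lm (m + 1) := by
    have hmapeq : Submodule.map N.subtype A' = Submodule.map N.subtype B' :=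
      congrArg _ (le_antisymm hA'B' hBA')
    rwa [hA', hB', Submodule.map_comap_subtype, Submodule.map_comap_subtype,
      inf_eq_right.mpr hAN, inf_eq_right.mpr hBN] at hmapeq
  -- Step 2: Nakayama
  have key : Lm m ≤ I • N ⊔ 𝔪 • Lm m :=
    le_sup_right.trans (hAB.le.trans (sup_le_sup_left (hsmul m) _))
  set π := (I • N : Submodule Λ L).mkQ with hπ
  have hfg : (Lm m).FG := by
    rw [hLm m, Submodule.smul_eq_map₂]
    exact Submodule.FG.map₂ _ (Submodule.fg_span (Set.finite_range _))
      (Module.finite_def.mp inferInstance)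
  have h0 : Submodule.map π (I • N) = ⊥ :=
    le_bot_iff.mp (Submodule.map_le_iff_le_comap.mpr
      (by rw [Submodule.comap_bot, Submodule.ker_mkQ]))
  have hle2 : Submodule.map π (Lm m) ≤ 𝔪 • Submodule.map π (Lm m) := by
    have h4 := Submodule.map_mono (f := π) key
    rwa [Submodule.map_sup, h0, bot_sup_eq, Submodule.map_smul''] at h4
  have hbot : Submodule.map π (Lm m) = ⊥ :=
    Submodule.eq_bot_of_le_smul_of_le_jacobson_bot 𝔪 _ (hfg.map π) hle2
      (by rw [IsLocalRing.jacobson_eq_maximalIdeal ⊥ bot_ne_top])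
  have hmain : Lm m ≤ I • N := by
    intro x hx
    have hx0 : π x ∈ (⊥ : Submodule Λ (L ⧸ (I • N : Submodule Λ L))) :=
      hbot ▸ Submodule.mem_map_of_mem hx
    rw [Submodule.mem_bot] at hx0
    rwa [← Submodule.ker_mkQ (I • N : Submodule Λ L), LinearMap.mem_ker]
  -- Consequences
  have hLmk : ∀ k, m ≤ k → Lm k ≤ Lm m := by
    intro k hk
    induction k, hk using Nat.le_induction with
    | base => exact le_rfl
    | succ n hn ih => exact (hmono n).trans ih
  have hsup : ∀ k, m ≤ k → I • N ⊔ Lm k = I • N :=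
    fun k hk => sup_eq_left.mpr ((hLmk k hk).trans hmain)
  refine ⟨hmain, hsup, ?_, fun k hk => by rw [hsup k hk, hA', hsup m le_rfl]⟩
  rw [show (I • N : Submodule Λ L) = I • N ⊔ Lm m from (hsup m le_rfl).symm, ← hA']
  exact h1
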